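/- For all complex numbers q and z with |q| < 1, the sum of z^{|S|} q^{Σ_{s∈S} s} over all finite subsets S of the positive integers equals the infinite product ∏_{i=1}^{∞} (1 + z q^i). -/

import Mathlib

open Filter Topology

lemma key_summable {ι : Type*} [DecidableEq ι] (g : ι → ℂ) (hg : Summable fun i => ‖g i‖) :
    Summable (fun S : Finset ι => ∏ i ∈ S, g i) := by
  apply Summable.of_norm
  have h0 : ∀ S : Finset ι, ‖∏ i ∈ S, g i‖ = ∏ i ∈ S, ‖g i‖ := fun S => norm_prod _ _
  simp only [h0]
  apply summable_of_sum_le (c := Real.exp (∑' i, ‖g i‖))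
  · intro S; positivity
  · intro u
    set s : Finset ι := u.sup id with hs
    have hsub : u ⊆ s.powerset := by
      intro t ht
      simp only [Finset.mem_powerset]
      exact Finset.le_sup (f := id) ht
    calc ∑ t ∈ u, ∏ i ∈ t, ‖g i‖
        ≤ ∑ t ∈ s.powerset, ∏ i ∈ t, ‖g i‖ := by
          apply Finset.sum_le_sum_of_subset_of_nonneg hsub
          intro t _ _; positivity
      _ = ∏ i ∈ s, (‖g i‖ + 1) := by
          rw [Finset.prod_add]
          simp
      _ ≤ ∏ i ∈ s, Real.exp ‖g i‖ := by
          apply Finset.prod_le_prod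
          · intro i _; positivity
          · intro i _; exact Real.add_one_le_exp _
      _ = Real.exp (∑ i ∈ s, ‖g i‖) := by rw [Real.exp_sum]
      _ ≤ Real.exp (∑' i, ‖g i‖) := by
          apply Real.exp_le_exp.2
          exact Summable.sum_le_tsum s (fun i _ => norm_nonneg _) hg

lemma key {ι : Type*} [DecidableEq ι] (g : ι → ℂ) (hg : Summable fun i => ‖g i‖) :
    (∑' S : Finset ι, ∏ i ∈ S, g i) = ∏' i, (1 + g i) := by
  have hF := key_summable g hg
  have hsum : HasSum (fun S : Finset ι => ∏ i ∈ S, g i) (∑' S : Finset ι, ∏ i ∈ S, g i) :=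
    hF.hasSum
  have hpow : Tendsto (fun s : Finset ι => s.powerset) atTop atTop := by
    apply tendsto_atTop_finset_of_monotone
    · intro a b hab
      exact Finset.powerset_mono.2 hab
    · intro t
      exact ⟨t, Finset.mem_powerset.2 le_rfl⟩
  have hprod : HasProd (fun i => 1 + g i) (∑' S : Finset ι, ∏ i ∈ S, g i) := by
    unfold HasProd
    have : (fun s : Finset ι => ∏ i ∈ s, (1 + g i)) =
        (fun u : Finset (Finset ι) => ∑ t ∈ u, ∏ i ∈ t, g i) ∘ (fun s => s.powerset) := by
      funext s
      simp only [Function.comp]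
      calc ∏ i ∈ s, (1 + g i) = ∏ i ∈ s, (g i + 1) := by
            exact Finset.prod_congr rfl (fun i _ => add_comm _ _)
        _ = ∑ t ∈ s.powerset, ∏ i ∈ t, g i := by
            rw [Finset.prod_add]; simp
    rw [this]
    exact hsum.comp hpow
  exact hprod.tprod_eq.symm

theorem tiling_generating_function (q z : ℂ) (hq : ‖q‖ < 1) :
    (∑' S : Finset ℕ+, z ^ S.card * q ^ (∑ s ∈ S, (s : ℕ))) =
      ∏' i : ℕ, (1 + z * q ^ (i + 1)) := by
  have hg : Summable fun s : ℕ+ => ‖z * q ^ (s : ℕ)‖ := by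
    have h1 : Summable fun n : ℕ => ‖z * q ^ n‖ := by
      simp only [norm_mul, norm_pow]
      exact (summable_geometric_of_lt_one (norm_nonneg q) hq).mul_left _
    exact h1.subtype _
  have h := key (fun s : ℕ+ => z * q ^ (s : ℕ)) hg
  have hL : (∑' S : Finset ℕ+, z ^ S.card * q ^ (∑ s ∈ S, (s : ℕ))) =
      ∑' S : Finset ℕ+, ∏ s ∈ S, z * q ^ (s : ℕ) := by
    congr 1; funext S
    rw [Finset.prod_mul_distrib, Finset.prod_const, Finset.prod_pow_eq_pow_sum]
  have hR : (∏' s : ℕ+, (1 + z * q ^ (s : ℕ))) = ∏' i : ℕ, (1 + z * q ^ (i + 1)) := by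
    rw [← Equiv.tprod_eq Equiv.pnatEquivNat.symm (fun s : ℕ+ => 1 + z * q ^ (s : ℕ))]
    apply tprod_congr
    intro i
    simp [Equiv.pnatEquivNat]
  rw [hL, h, hR]
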